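/- For all y in ℝ, the integral over t ∈ (0,1) of t^{-1/2} Φ(-|y|/√(1-t)) dt equals e^{-y²/2} - √(2π)·|y|·Φ(-|y|). -/

import Mathlib

open MeasureTheory Set

/-- The standard normal cumulative distribution function. -/
noncomputable def gaussCdf (x : ℝ) : ℝ :=
  (1 / Real.sqrt (2 * Real.pi)) * ∫ t in Set.Iio x, Real.exp (-t ^ 2 / 2)

namespace GaussAux

noncomputable def pdf (t : ℝ) : ℝ := Real.exp (-t ^ 2 / 2)

lemma pdf_eq : pdf = fun t : ℝ => Real.exp (-(1/2) * t ^ 2) := by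
  funext t; unfold pdf; ring_nf

lemma pdf_pos (t : ℝ) : 0 < pdf t := Real.exp_pos _

lemma pdf_cont : Continuous pdf := by
  unfold pdf; fun_prop

lemma pdf_integrable : Integrable pdf := by
  rw [pdf_eq]; exact integrable_exp_neg_mul_sq (by norm_num)

lemma pdf_integral : ∫ t : ℝ, pdf t = Real.sqrt (2 * Real.pi) := by
  rw [pdf_eq, integral_gaussian, show Real.pi / (1/2) = 2 * Real.pi by ring]

lemma pdf_integral_Ioi : ∫ t in Ioi (0:ℝ), pdf t = Real.sqrt (2 * Real.pi) / 2 := by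
  rw [pdf_eq, integral_gaussian_Ioi, show Real.pi / (1/2) = 2 * Real.pi by ring]

lemma pdf_neg (t : ℝ) : pdf (-t) = pdf t := by unfold pdf; ring_nf

lemma sqrt_two_pi_pos : 0 < Real.sqrt (2 * Real.pi) :=
  Real.sqrt_pos.2 (by positivity)

lemma gaussCdf_eq (x : ℝ) :
    gaussCdf x = (Real.sqrt (2 * Real.pi))⁻¹ * ∫ t in Iio x, pdf t := by
  rw [gaussCdf, one_div]; rfl

lemma gaussCdf_nonneg (x : ℝ) : 0 ≤ gaussCdf x := by
  rw [gaussCdf_eq]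
  exact mul_nonneg (by positivity) (integral_nonneg fun t => (pdf_pos t).le)

lemma gaussCdf_le_one (x : ℝ) : gaussCdf x ≤ 1 := by
  rw [gaussCdf_eq]
  have h : ∫ t in Iio x, pdf t ≤ Real.sqrt (2 * Real.pi) := by
    rw [← pdf_integral]
    exact setIntegral_le_integral pdf_integrable
      (Filter.Eventually.of_forall fun t => (pdf_pos t).le)
  calc (Real.sqrt (2 * Real.pi))⁻¹ * ∫ t in Iio x, pdf t
      ≤ (Real.sqrt (2 * Real.pi))⁻¹ * Real.sqrt (2 * Real.pi) :=
        mul_le_mul_of_nonneg_left h (by positivity)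
    _ = 1 := inv_mul_cancel₀ (ne_of_gt sqrt_two_pi_pos)

lemma integral_pdf_Iic_neg (a : ℝ) :
    ∫ s in Iic (-a), pdf s = ∫ s in Ioi a, pdf s := by
  rw [← integral_comp_neg_Ioi]
  exact setIntegral_congr_fun measurableSet_Ioi fun s _ => pdf_neg s

lemma gaussCdf_zero : gaussCdf 0 = 1/2 := by
  have h1 : (∫ s in Iic (0:ℝ), pdf s) + ∫ s in Ioi (0:ℝ), pdf s = Real.sqrt (2*Real.pi) := by
    rw [intervalIntegral.integral_Iic_add_Ioi pdf_integrable.integrableOn pdf_integrable.integrableOn]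
    exact pdf_integral
  have h2 : (∫ s in Iic (0:ℝ), pdf s) = ∫ s in Ioi (0:ℝ), pdf s := by
    simpa using integral_pdf_Iic_neg 0
  have h3 : (∫ s in Iic (0:ℝ), pdf s) = Real.sqrt (2*Real.pi)/2 := by linarith
  rw [gaussCdf_eq, ← integral_Iic_eq_integral_Iio]
  show (Real.sqrt (2 * Real.pi))⁻¹ * ∫ t in Iic (0:ℝ), pdf t = 1/2
  rw [h3]
  field_simp

lemma integral_pdf_Ioi (a : ℝ) :
    ∫ s in Ioi a, pdf s = Real.sqrt (2 * Real.pi) * gaussCdf (-a) := by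
  rw [gaussCdf_eq, ← integral_Iic_eq_integral_Iio, ← integral_pdf_Iic_neg a,
    ← mul_assoc, mul_inv_cancel₀ (ne_of_gt sqrt_two_pi_pos), one_mul]

lemma tendsto_gaussCdf_neg :
    Filter.Tendsto (fun s : ℝ => gaussCdf (-s)) Filter.atTop (nhds 0) := by
  have h : Filter.Tendsto (fun s : ℝ => ∫ t in Iio (-s), pdf t) Filter.atTop (nhds 0) := by
    have hempty : (⋂ s : ℝ, Iio (-s)) = ∅ := by
      ext x
      simp only [mem_iInter, mem_Iio, mem_empty_iff_false, iff_false, not_forall, not_lt]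
      exact ⟨-x, by simp⟩
    have := tendsto_setIntegral_of_antitone (f := pdf) (μ := volume)
      (s := fun s : ℝ => Iio (-s)) (fun _ => measurableSet_Iio)
      (fun i j hij => Iio_subset_Iio (by linarith))
      ⟨0, pdf_integrable.integrableOn⟩
    rwa [hempty, Measure.restrict_empty, integral_zero_measure] at this
  have := h.const_mul ((Real.sqrt (2*Real.pi))⁻¹)
  simp only [mul_zero] at this
  refine this.congr fun s => ?_
  rw [gaussCdf_eq]

lemma hasDerivAt_gaussCdf (x : ℝ) :
    HasDerivAt gaussCdf ((Real.sqrt (2 * Real.pi))⁻¹ * pdf x) x := by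
  have hfun : gaussCdf = fun u =>
      (Real.sqrt (2 * Real.pi))⁻¹ * ((∫ t in Iic (0:ℝ), pdf t) + ∫ t in (0:ℝ)..u, pdf t) := by
    funext u
    rw [gaussCdf_eq, ← integral_Iic_eq_integral_Iio,
      ← intervalIntegral.integral_Iic_sub_Iic pdf_integrable.integrableOn pdf_integrable.integrableOn]
    ring
  rw [hfun]
  have hd : HasDerivAt (fun u => ∫ t in (0:ℝ)..u, pdf t) (pdf x) x := by
    exact intervalIntegral.integral_hasDerivAt_right
      (pdf_integrable.intervalIntegrable)
      pdf_cont.aestronglyMeasurable.stronglyMeasurableAtFilter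
      pdf_cont.continuousAt
  exact (hd.const_add _).const_mul _

lemma hasDerivAt_gaussCdf_neg (s : ℝ) :
    HasDerivAt (fun s : ℝ => gaussCdf (-s))
      (-((Real.sqrt (2 * Real.pi))⁻¹ * pdf s)) s := by
  have h := (hasDerivAt_gaussCdf (-s)).comp s (hasDerivAt_neg s)
  rw [pdf_neg] at h
  refine h.congr_deriv ?_
  ring

lemma continuous_gaussCdf : Continuous gaussCdf := by
  rw [continuous_iff_continuousAt]
  exact fun x => (hasDerivAt_gaussCdf x).continuousAt

section Main

variable {a : ℝ} (ha : 0 < a)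

lemma sub1 (ha : 0 < a) :
    (∫ t in Ioo (0:ℝ) 1, (1 / Real.sqrt t) * gaussCdf (-(a / Real.sqrt (1 - t))))
      = ∫ s in Ioi a, (2*a^2/(s^2*Real.sqrt (s^2-a^2))) * gaussCdf (-s) := by
  have himg : (fun s : ℝ => 1 - a^2/s^2) '' Ioi a = Ioo 0 1 := by
    ext t
    constructor
    · rintro ⟨s, hs, rfl⟩
      rw [mem_Ioi] at hs
      have hs0 : 0 < s := ha.trans hs
      have hq : a^2/s^2 < 1 := by
        rw [div_lt_one (by positivity)]
        nlinarith
      have hq0 : 0 < a^2/s^2 := by positivity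
      exact ⟨by linarith, by linarith⟩
    · intro ht
      have h1t : 0 < 1 - t := by linarith [ht.2]
      have hpos : 0 < Real.sqrt (1-t) := Real.sqrt_pos.2 h1t
      have hsq : (a / Real.sqrt (1-t))^2 = a^2/(1-t) := by
        rw [div_pow, Real.sq_sqrt h1t.le]
      refine ⟨a / Real.sqrt (1 - t), ?_, ?_⟩
      · have hlt : Real.sqrt (1 - t) < 1 := by
          nlinarith [Real.sq_sqrt h1t.le, ht.1, Real.sqrt_nonneg (1-t)]
        rw [mem_Ioi, lt_div_iff₀ hpos]
        nlinarith
      · show 1 - a^2/(a / Real.sqrt (1-t))^2 = t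
        rw [hsq, div_div_eq_mul_div, mul_comm, mul_div_assoc,
          div_self (pow_ne_zero 2 ha.ne'), mul_one]
        ring
  have hderiv : ∀ s ∈ Ioi a, HasDerivWithinAt (fun s : ℝ => 1 - a^2/s^2)
      (2*a^2/s^3) (Ioi a) s := by
    intro s hs
    rw [mem_Ioi] at hs
    have hs0 : s ≠ 0 := (ha.trans hs).ne'
    have h1 : HasDerivAt (fun s : ℝ => s^2) (2*s) s := by
      simpa using hasDerivAt_pow 2 s
    have h3 : HasDerivAt (fun s : ℝ => a^2 / s^2) (a^2 * (-(2*s)/(s^2)^2)) s := by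
      simpa [div_eq_mul_inv] using (h1.inv (pow_ne_zero 2 hs0)).const_mul (a^2)
    have h4 := (hasDerivAt_const s (1:ℝ)).sub h3
    have h5 : (0 : ℝ) - a^2 * (-(2*s)/(s^2)^2) = 2*a^2/s^3 := by
      field_simp; ring
    rw [h5] at h4
    exact h4.hasDerivWithinAt
  have hinj : InjOn (fun s : ℝ => 1 - a^2/s^2) (Ioi a) := by
    intro x hx y hy h
    rw [mem_Ioi] at hx hy
    have hx0 : 0 < x := ha.trans hx
    have hy0 : 0 < y := ha.trans hy
    simp only at h
    have hxy : x^2 = y^2 := by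
      field_simp at h
      have h' : a^2 * x^2 = a^2 * y^2 := by ring_nf at h ⊢; linarith
      exact mul_left_cancel₀ (pow_ne_zero 2 ha.ne') h'
    have := congrArg Real.sqrt hxy
    rwa [Real.sqrt_sq hx0.le, Real.sqrt_sq hy0.le] at this
  rw [← himg, integral_image_eq_integral_abs_deriv_smul measurableSet_Ioi hderiv hinj]
  refine setIntegral_congr_fun measurableSet_Ioi fun s hs => ?_
  rw [mem_Ioi] at hs
  have hs0 : 0 < s := ha.trans hs
  have hd : 0 < s^2 - a^2 := by nlinarith
  have hsd : 0 < Real.sqrt (s^2 - a^2) := Real.sqrt_pos.2 hd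
  have h1 : 1 - (1 - a^2/s^2) = a^2/s^2 := by ring
  have h2 : Real.sqrt (a^2/s^2) = a/s := by
    rw [← div_pow, Real.sqrt_sq (by positivity)]
  have h3 : a / (a/s) = s := by field_simp
  have h4 : (1 : ℝ) - a^2/s^2 = (s^2 - a^2)/s^2 := by field_simp
  have h5 : Real.sqrt ((s^2-a^2)/s^2) = Real.sqrt (s^2-a^2)/s := by
    rw [Real.sqrt_div hd.le, Real.sqrt_sq hs0.le]
  simp only [smul_eq_mul, h1, h2, h3, h4, h5]
  rw [abs_of_pos (by positivity)]
  field_simp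
  ring
  congr 2
  rw [show a^2 * s⁻¹^2 = (a/s)^2 by ring, Real.sqrt_sq (by positivity)]
  field_simp

lemma ibp (ha : 0 < a) :
    (∫ s in Ioi a, (2*a^2/(s^2*Real.sqrt (s^2-a^2))) * gaussCdf (-s))
      = ∫ s in Ioi a, (2*Real.sqrt (s^2-a^2)/s) * ((Real.sqrt (2*Real.pi))⁻¹ * pdf s) := by
  have h2pi := sqrt_two_pi_pos
  set C := (Real.sqrt (2*Real.pi))⁻¹ with hC
  have hCpos : 0 < C := by positivity
  have hChalf : C ≤ 1/2 := by
    rw [hC]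
    rw [inv_le_comm₀ h2pi (by norm_num)]
    rw [show ((1:ℝ)/2)⁻¹ = 2 by norm_num]
    nlinarith [Real.sq_sqrt (by positivity : (0:ℝ) ≤ 2*Real.pi),
      Real.sqrt_nonneg (2*Real.pi), Real.two_le_pi]
  set G : ℝ → ℝ := fun s => 2*Real.sqrt (s^2-a^2)/s with hGdef
  set g : ℝ → ℝ := fun s => 2*a^2/(s^2*Real.sqrt (s^2-a^2)) with hgdef
  have hGderiv : ∀ s ∈ Ioi a, HasDerivAt G (g s) s := by
    intro s hs
    rw [mem_Ioi] at hs
    have hs0 : 0 < s := ha.trans hs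
    have hd : 0 < s^2 - a^2 := by nlinarith
    have hsd : 0 < Real.sqrt (s^2-a^2) := Real.sqrt_pos.2 hd
    have h1 : HasDerivAt (fun s : ℝ => s^2 - a^2) (2*s) s := by
      simpa using (hasDerivAt_pow 2 s).sub_const (a^2)
    have h2 : HasDerivAt (fun s : ℝ => Real.sqrt (s^2 - a^2))
        (1 / (2 * Real.sqrt (s^2-a^2)) * (2*s)) s :=
      (Real.hasDerivAt_sqrt hd.ne').comp s h1
    have h4 := (h2.const_mul 2).div (hasDerivAt_id s) hs0.ne'
    refine h4.congr_deriv ?_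
    symm
    rw [hgdef]
    have hsq : Real.sqrt (s^2-a^2) * Real.sqrt (s^2-a^2) = s^2 - a^2 :=
      Real.mul_self_sqrt hd.le
    simp only [id_eq, mul_one]
    field_simp
    linear_combination hsq
  have hGnonnegIoi : ∀ s ∈ Ioi a, 0 ≤ G s := by
    intro s hs
    rw [mem_Ioi] at hs
    have hs0 : 0 < s := ha.trans hs
    rw [hGdef]
    positivity
  have hGle2 : ∀ s ∈ Ioi a, G s ≤ 2 := by
    intro s hs
    rw [mem_Ioi] at hs
    have hs0 : 0 < s := ha.trans hs
    rw [hGdef]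
    have h1 : Real.sqrt (s^2 - a^2) ≤ s := by
      rw [show s = Real.sqrt (s^2) by rw [Real.sqrt_sq hs0.le]]
      apply Real.sqrt_le_sqrt
      nlinarith [Real.sqrt_sq hs0.le]
    rw [div_le_iff₀ hs0]
    nlinarith
  have hGcont : ContinuousWithinAt G (Ici a) a := by
    apply ContinuousAt.continuousWithinAt
    apply ContinuousAt.div
    · exact (Continuous.continuousAt (by fun_prop))
    · exact continuousAt_id
    · exact ha.ne'
  have hGtop2 : Filter.Tendsto (fun s : ℝ => 2 * Real.sqrt (1 - a^2/s^2))
      Filter.atTop (nhds 2) := by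
    have h0 : Filter.Tendsto (fun s : ℝ => a^2/s^2) Filter.atTop (nhds 0) := by
      simp only [div_eq_mul_inv]
      have := ((Filter.tendsto_pow_atTop (two_ne_zero)).inv_tendsto_atTop (α := ℝ)).const_mul (a^2)
      simpa using this
    have h1 : Filter.Tendsto (fun s : ℝ => 1 - a^2/s^2) Filter.atTop (nhds 1) := by
      simpa using (tendsto_const_nhds (x := (1:ℝ)) (f := Filter.atTop)).sub h0
    have h2 := (Real.continuous_sqrt.tendsto 1).comp h1
    rw [Real.sqrt_one] at h2
    simpa [Function.comp] using h2.const_mul 2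
  have hGtop : Filter.Tendsto G Filter.atTop (nhds 2) := by
    have hev : ∀ᶠ s in Filter.atTop, G s = 2 * Real.sqrt (1 - a^2/s^2) := by
      filter_upwards [Filter.eventually_gt_atTop a] with s hs
      have hs0 : 0 < s := ha.trans hs
      have hd : 0 < s^2 - a^2 := by nlinarith
      rw [hGdef]
      simp only
      rw [show (1:ℝ) - a^2/s^2 = (s^2-a^2)/s^2 by field_simp,
        Real.sqrt_div hd.le, Real.sqrt_sq hs0.le]
      ring
    exact hGtop2.congr' (hev.mono fun _ h => h.symm)
  have hgcontOn : ContinuousOn g (Ioi a) := by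
    intro s hs
    rw [mem_Ioi] at hs
    have hs0 : 0 < s := ha.trans hs
    have hd : 0 < s^2 - a^2 := by nlinarith
    have hsd : 0 < Real.sqrt (s^2-a^2) := Real.sqrt_pos.2 hd
    apply ContinuousAt.continuousWithinAt
    apply ContinuousAt.div
    · fun_prop
    · fun_prop
    · positivity
  have hGcontOn : ContinuousOn G (Ioi a) := by
    intro s hs
    rw [mem_Ioi] at hs
    have hs0 : 0 < s := ha.trans hs
    apply ContinuousAt.continuousWithinAt
    apply ContinuousAt.div
    · exact (Continuous.continuousAt (by fun_prop))
    · exact continuousAt_id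
    · exact hs0.ne'
  have hgnonneg : ∀ s ∈ Ioi a, 0 ≤ g s := by
    intro s hs
    rw [hgdef]
    positivity
  have Ig : IntegrableOn g (Ioi a) :=
    integrableOn_Ioi_deriv_of_nonneg hGcont hGderiv hgnonneg hGtop
  have I1 : IntegrableOn (fun s => g s * gaussCdf (-s)) (Ioi a) := by
    apply Integrable.mono' Ig
    · exact (hgcontOn.mul
        (continuous_gaussCdf.comp continuous_neg).continuousOn).aestronglyMeasurable
        measurableSet_Ioi
    · rw [ae_restrict_iff' measurableSet_Ioi]
      filter_upwards with s hs
      rw [Real.norm_eq_abs, abs_mul, abs_of_nonneg (hgnonneg s hs),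
        abs_of_nonneg (gaussCdf_nonneg _)]
      nlinarith [gaussCdf_le_one (-s), gaussCdf_nonneg (-s), hgnonneg s hs]
  have I2 : IntegrableOn (fun s => G s * (C * pdf s)) (Ioi a) := by
    apply Integrable.mono' (pdf_integrable.integrableOn (s := Ioi a))
    · exact (hGcontOn.mul (continuous_const.mul pdf_cont).continuousOn).aestronglyMeasurable
        measurableSet_Ioi
    · rw [ae_restrict_iff' measurableSet_Ioi]
      filter_upwards with s hs
      rw [Real.norm_eq_abs, abs_mul, abs_of_nonneg (hGnonnegIoi s hs),
        abs_of_nonneg (mul_nonneg hCpos.le (pdf_pos s).le)]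
      nlinarith [hGle2 s hs, hGnonnegIoi s hs, (pdf_pos s).le, hCpos.le, hChalf,
        mul_le_mul_of_nonneg_right (hGle2 s hs) (mul_nonneg hCpos.le (pdf_pos s).le)]
  set F : ℝ → ℝ := fun s => G s * gaussCdf (-s) with hFdef
  have hFderiv : ∀ s ∈ Ioi a, HasDerivAt F
      (g s * gaussCdf (-s) - G s * (C * pdf s)) s := by
    intro s hs
    have h := (hGderiv s hs).mul (hasDerivAt_gaussCdf_neg s)
    rw [← hC] at h
    refine h.congr_deriv ?_
    ring
  have hFcont : ContinuousWithinAt F (Ici a) a :=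
    hGcont.mul ((continuous_gaussCdf.comp continuous_neg).continuousAt.continuousWithinAt)
  have hFtop : Filter.Tendsto F Filter.atTop (nhds 0) := by
    apply squeeze_zero' (f := F)
    · filter_upwards [Filter.eventually_gt_atTop a] with s hs
      exact mul_nonneg (hGnonnegIoi s hs) (gaussCdf_nonneg _)
    · filter_upwards [Filter.eventually_gt_atTop a] with s hs
      exact mul_le_mul_of_nonneg_right (hGle2 s hs) (gaussCdf_nonneg _)
    · simpa using tendsto_gaussCdf_neg.const_mul 2
  have key := integral_Ioi_of_hasDerivAt_of_tendsto hFcont hFderiv (I1.sub I2) hFtop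
  have hFa : F a = 0 := by
    rw [hFdef, hGdef]
    simp [sub_self]
  rw [integral_sub I1 I2, hFa, sub_zero] at key
  have : (∫ s in Ioi a, g s * gaussCdf (-s)) = ∫ s in Ioi a, G s * (C * pdf s) := by
    linarith
  exact this

lemma sub2 (ha : 0 < a) :
    (∫ s in Ioi a, (2*Real.sqrt (s^2-a^2)/s) * ((Real.sqrt (2*Real.pi))⁻¹ * pdf s))
      = (2 * (Real.sqrt (2*Real.pi))⁻¹ * Real.exp (-a^2/2)) *
        ∫ v in Ioi (0:ℝ), v^2/(a^2+v^2) * Real.exp (-v^2/2) := by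
  have himg : (fun v : ℝ => Real.sqrt (a^2+v^2)) '' Ioi 0 = Ioi a := by
    ext s
    constructor
    · rintro ⟨v, hv, rfl⟩
      rw [mem_Ioi] at hv ⊢
      calc a = Real.sqrt (a^2) := (Real.sqrt_sq ha.le).symm
        _ < Real.sqrt (a^2+v^2) := Real.sqrt_lt_sqrt (by positivity) (by nlinarith)
    · intro hs
      rw [mem_Ioi] at hs
      have hs0 : 0 < s := ha.trans hs
      have hd : 0 < s^2-a^2 := by nlinarith
      refine ⟨Real.sqrt (s^2-a^2), Real.sqrt_pos.2 hd, ?_⟩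
      simp only
      rw [Real.sq_sqrt hd.le, show a^2 + (s^2-a^2) = s^2 by ring, Real.sqrt_sq hs0.le]
  have hderiv : ∀ v ∈ Ioi (0:ℝ), HasDerivWithinAt (fun v : ℝ => Real.sqrt (a^2+v^2))
      (v / Real.sqrt (a^2+v^2)) (Ioi 0) v := by
    intro v hv
    rw [mem_Ioi] at hv
    have hpos : 0 < a^2+v^2 := by positivity
    have hsp : 0 < Real.sqrt (a^2+v^2) := Real.sqrt_pos.2 hpos
    have h1 : HasDerivAt (fun v : ℝ => a^2 + v^2) (2*v) v := by
      simpa using (hasDerivAt_pow 2 v).const_add (a^2)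
    have h2 := (Real.hasDerivAt_sqrt hpos.ne').comp v h1
    have h3 : 1 / (2*Real.sqrt (a^2+v^2)) * (2*v) = v / Real.sqrt (a^2+v^2) := by
      field_simp
    rw [h3] at h2
    exact h2.hasDerivWithinAt
  have hinj : InjOn (fun v : ℝ => Real.sqrt (a^2+v^2)) (Ioi 0) := by
    intro x hx y hy h
    rw [mem_Ioi] at hx hy
    simp only at h
    have h2 := congrArg (fun t : ℝ => t^2) h
    simp only [Real.sq_sqrt (by positivity : (0:ℝ) ≤ a^2+x^2),
      Real.sq_sqrt (by positivity : (0:ℝ) ≤ a^2+y^2)] at h2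
    have hxy : x^2 = y^2 := by linarith
    have h3 := congrArg Real.sqrt hxy
    rwa [Real.sqrt_sq hx.le, Real.sqrt_sq hy.le] at h3
  rw [← himg, integral_image_eq_integral_abs_deriv_smul measurableSet_Ioi hderiv hinj,
    ← MeasureTheory.integral_const_mul]
  refine setIntegral_congr_fun measurableSet_Ioi fun v hv => ?_
  rw [mem_Ioi] at hv
  have hpos : 0 < a^2+v^2 := by positivity
  have hsp : 0 < Real.sqrt (a^2+v^2) := Real.sqrt_pos.2 hpos
  rw [smul_eq_mul, abs_of_pos (by positivity)]
  simp only [pdf]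
  rw [Real.sq_sqrt hpos.le, show a^2+v^2-a^2 = v^2 by ring, Real.sqrt_sq hv.le,
    show -(a^2+v^2)/2 = -a^2/2 + -v^2/2 by ring, Real.exp_add]
  field_simp
  rw [Real.sq_sqrt hpos.le]

lemma splitv (ha : 0 < a) :
    (∫ v in Ioi (0:ℝ), v^2/(a^2+v^2) * Real.exp (-v^2/2))
      = Real.sqrt (2*Real.pi)/2
        - a^2 * ∫ v in Ioi (0:ℝ), (a^2+v^2)⁻¹ * Real.exp (-v^2/2) := by
  have hc : Continuous fun v : ℝ => a^2 * ((a^2+v^2)⁻¹ * Real.exp (-v^2/2)) := by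
    apply Continuous.mul continuous_const
    apply Continuous.mul
    · exact Continuous.inv₀ (by fun_prop) (fun v => by positivity)
    · fun_prop
  have hIb : IntegrableOn (fun v : ℝ => a^2 * ((a^2+v^2)⁻¹ * Real.exp (-v^2/2))) (Ioi 0) := by
    apply Integrable.mono' (pdf_integrable.integrableOn (s := Ioi 0))
    · exact hc.aestronglyMeasurable.restrict
    · filter_upwards with v
      rw [Real.norm_eq_abs, abs_of_nonneg (by positivity)]
      simp only [pdf]
      have hp : 0 < a^2+v^2 := by positivity
      have h1 : a^2 * (a^2+v^2)⁻¹ ≤ 1 := by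
        rw [← div_eq_mul_inv, div_le_one hp]
        nlinarith
      nlinarith [Real.exp_pos (-v^2/2), mul_pos hp (Real.exp_pos (-v^2/2)),
        mul_le_mul_of_nonneg_right h1 (Real.exp_pos (-v^2/2)).le]
  have hconv : ∀ v ∈ Ioi (0:ℝ), v^2/(a^2+v^2) * Real.exp (-v^2/2)
      = pdf v - a^2 * ((a^2+v^2)⁻¹ * Real.exp (-v^2/2)) := by
    intro v _
    have hp : 0 < a^2+v^2 := by positivity
    simp only [pdf]
    field_simp
    ring
  rw [setIntegral_congr_fun measurableSet_Ioi hconv,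
    integral_sub (pdf_integrable.integrableOn) hIb, pdf_integral_Ioi,
    MeasureTheory.integral_const_mul]

lemma mills (ha : 0 < a) :
    (∫ v in Ioi (0:ℝ), (a^2+v^2)⁻¹ * Real.exp (-v^2/2))
      = Real.sqrt (2*Real.pi)/(2*a) * Real.exp (a^2/2) * ∫ s in Ioi a, pdf s := by
  -- ∫_0^∞ e^{-cx} dx = 1/c
  have hexpint : ∀ c : ℝ, 0 < c → (∫ x in Ioi (0:ℝ), Real.exp (-(c*x))) = c⁻¹ := by
    intro c hc
    have hderiv : ∀ x ∈ Ioi (0:ℝ),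
        HasDerivAt (fun x : ℝ => -(c⁻¹ * Real.exp (-(c*x)))) (Real.exp (-(c*x))) x := by
      intro x _
      have h1 : HasDerivAt (fun x : ℝ => -(c*x)) (-c) x := by
        simpa using (hasDerivAt_id x).const_mul (-c)
      have h2 := (Real.hasDerivAt_exp (-(c*x))).comp x h1
      have h3 := (h2.const_mul c⁻¹).neg
      refine h3.congr_deriv ?_
      field_simp
    have hcont : ContinuousWithinAt (fun x : ℝ => -(c⁻¹ * Real.exp (-(c*x)))) (Ici 0) 0 :=
      (Continuous.continuousAt (by fun_prop)).continuousWithinAt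
    have hint : IntegrableOn (fun x : ℝ => Real.exp (-(c*x))) (Ioi 0) := by
      have := exp_neg_integrableOn_Ioi 0 hc
      simpa [neg_mul] using this
    have htop : Filter.Tendsto (fun x : ℝ => -(c⁻¹ * Real.exp (-(c*x))))
        Filter.atTop (nhds 0) := by
      have h0 : Filter.Tendsto (fun x : ℝ => c*x) Filter.atTop Filter.atTop :=
        Filter.Tendsto.const_mul_atTop hc Filter.tendsto_id
      have h1 : Filter.Tendsto (fun x : ℝ => -(c*x)) Filter.atTop Filter.atBot :=
        Filter.tendsto_neg_atBot_iff.2 h0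
      have h2 := Real.tendsto_exp_atBot.comp h1
      have h3 := (h2.const_mul c⁻¹).neg
      simpa [Function.comp] using h3
    have := integral_Ioi_of_hasDerivAt_of_tendsto hcont hderiv hint htop
    rw [this]
    norm_num
  have hprodpos : ∀ v : ℝ, (0:ℝ) < a^2+v^2 := fun v => by positivity
  set f : ℝ → ℝ → ℝ := fun v x => Real.exp (-((a^2+v^2)*x)) * Real.exp (-v^2/2) with hfdef
  have hleft : (∫ v in Ioi (0:ℝ), (a^2+v^2)⁻¹ * Real.exp (-v^2/2))
      = ∫ v in Ioi (0:ℝ), ∫ x in Ioi (0:ℝ), f v x := by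
    refine setIntegral_congr_fun measurableSet_Ioi fun v _ => ?_
    rw [hfdef]
    simp only
    rw [MeasureTheory.integral_mul_const, hexpint _ (hprodpos v)]
  have hIf : Integrable (Function.uncurry f)
      ((volume.restrict (Ioi (0:ℝ))).prod (volume.restrict (Ioi (0:ℝ)))) := by
    have hg : Integrable (fun z : ℝ × ℝ => pdf z.1 * Real.exp (-(a^2*z.2)))
        ((volume.restrict (Ioi (0:ℝ))).prod (volume.restrict (Ioi (0:ℝ)))) := by
      have hexp2 : Integrable (fun x : ℝ => Real.exp (-(a^2*x)))
          (volume.restrict (Ioi (0:ℝ))) := by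
        have := exp_neg_integrableOn_Ioi 0 (show (0:ℝ) < a^2 by positivity)
        simpa [neg_mul, IntegrableOn] using this
      exact Integrable.mul_prod pdf_integrable.integrableOn hexp2
    apply Integrable.mono' hg
    · apply Continuous.aestronglyMeasurable
      rw [hfdef]
      fun_prop
    · rw [Measure.prod_restrict, ae_restrict_iff' (measurableSet_Ioi.prod measurableSet_Ioi)]
      filter_upwards with z hz
      obtain ⟨hv, hx⟩ := hz
      rw [mem_Ioi] at hv hx
      rw [hfdef]
      simp only [Function.uncurry, pdf]
      rw [Real.norm_eq_abs, abs_of_nonneg (by positivity)]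
      have h1 : Real.exp (-((a^2+z.1^2)*z.2)) ≤ Real.exp (-(a^2*z.2)) := by
        apply Real.exp_le_exp.2
        nlinarith [sq_nonneg z.1]
      nlinarith [Real.exp_pos (-z.1^2/2), Real.exp_pos (-(a^2*z.2)),
        mul_le_mul_of_nonneg_right h1 (Real.exp_pos (-z.1^2/2)).le]
  have hswap := MeasureTheory.integral_integral_swap hIf
  have hinner : ∀ x ∈ Ioi (0:ℝ), (∫ v in Ioi (0:ℝ), f v x)
      = Real.exp (-(a^2*x)) * (Real.sqrt (Real.pi/(x+1/2))/2) := by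
    intro x _
    have hcongr : ∀ v ∈ Ioi (0:ℝ), f v x
        = Real.exp (-(a^2*x)) * Real.exp (-(x+1/2) * v^2) := by
      intro v _
      rw [hfdef]
      simp only
      rw [← Real.exp_add, ← Real.exp_add]
      congr 1
      ring
    rw [setIntegral_congr_fun measurableSet_Ioi hcongr,
      MeasureTheory.integral_const_mul, integral_gaussian_Ioi]
  have hright : (∫ x in Ioi (0:ℝ), ∫ v in Ioi (0:ℝ), f v x)
      = ∫ x in Ioi (0:ℝ), Real.exp (-(a^2*x)) * (Real.sqrt (Real.pi/(x+1/2))/2) :=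
    setIntegral_congr_fun measurableSet_Ioi hinner
  -- substitution x = (s^2-a^2)/(2a^2)
  have himg : (fun s : ℝ => (s^2-a^2)/(2*a^2)) '' Ioi a = Ioi (0:ℝ) := by
    ext x
    constructor
    · rintro ⟨s, hs, rfl⟩
      rw [mem_Ioi] at hs ⊢
      have : 0 < s^2-a^2 := by nlinarith
      positivity
    · intro hx
      rw [mem_Ioi] at hx
      refine ⟨Real.sqrt (a^2 + 2*a^2*x), ?_, ?_⟩
      · rw [mem_Ioi]
        calc a = Real.sqrt (a^2) := (Real.sqrt_sq ha.le).symm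
          _ < Real.sqrt (a^2 + 2*a^2*x) := Real.sqrt_lt_sqrt (by positivity)
              (by nlinarith [mul_pos (pow_pos ha 2) hx])
      · simp only
        rw [Real.sq_sqrt (by nlinarith : (0:ℝ) ≤ a^2 + 2*a^2*x)]
        field_simp
        ring
  have hderiv : ∀ s ∈ Ioi a, HasDerivWithinAt (fun s : ℝ => (s^2-a^2)/(2*a^2))
      (s/a^2) (Ioi a) s := by
    intro s _
    have h1 : HasDerivAt (fun s : ℝ => (s^2-a^2)/(2*a^2)) (2*s/(2*a^2)) s := by
      simpa using ((hasDerivAt_pow 2 s).sub_const (a^2)).div_const (2*a^2)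
    have h2 : 2*s/(2*a^2) = s/a^2 := by
      field_simp
    rw [h2] at h1
    exact h1.hasDerivWithinAt
  have hinj : InjOn (fun s : ℝ => (s^2-a^2)/(2*a^2)) (Ioi a) := by
    intro x hx y hy h
    rw [mem_Ioi] at hx hy
    have hx0 : 0 < x := ha.trans hx
    have hy0 : 0 < y := ha.trans hy
    simp only at h
    field_simp at h
    exact (pow_left_inj₀ hx0.le hy0.le two_ne_zero).1 (by linarith)
  rw [hleft, hswap, hright, ← himg,
    integral_image_eq_integral_abs_deriv_smul measurableSet_Ioi hderiv hinj,
    show Real.sqrt (2*Real.pi)/(2*a) * Real.exp (a^2/2) * (∫ s in Ioi a, pdf s)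
      = ∫ s in Ioi a, Real.sqrt (2*Real.pi)/(2*a) * Real.exp (a^2/2) * pdf s
      from (MeasureTheory.integral_const_mul _ _).symm]
  refine setIntegral_congr_fun measurableSet_Ioi fun s hs => ?_
  rw [mem_Ioi] at hs
  have hs0 : 0 < s := ha.trans hs
  rw [smul_eq_mul, abs_of_pos (by positivity)]
  have e1 : -(a^2 * ((s^2-a^2)/(2*a^2))) = a^2/2 + -s^2/2 := by
    field_simp
    ring
  have e2 : (s^2-a^2)/(2*a^2) + 1/2 = s^2/(2*a^2) := by
    field_simp
    ring
  have e3 : Real.sqrt (Real.pi/(s^2/(2*a^2))) = Real.sqrt (2*Real.pi) * a / s := by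
    rw [show Real.pi/(s^2/(2*a^2)) = (a/s)^2 * (2*Real.pi) by field_simp,
      Real.sqrt_mul (sq_nonneg _), Real.sqrt_sq (by positivity)]
    ring
  rw [e1, e2, e3, Real.exp_add]
  simp only [pdf]
  field_simp

lemma main_pos (ha : 0 < a) :
    (∫ t in Ioo (0:ℝ) 1, (1 / Real.sqrt t) * gaussCdf (-(a / Real.sqrt (1 - t))))
      = Real.exp (-a^2/2) - Real.sqrt (2*Real.pi) * a * gaussCdf (-a) := by
  have h2pi := sqrt_two_pi_pos
  rw [sub1 ha, ibp ha, sub2 ha, splitv ha, mills ha, integral_pdf_Ioi]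
  rw [mul_sub]
  have e1 : (2 * (Real.sqrt (2*Real.pi))⁻¹ * Real.exp (-a^2/2)) * (Real.sqrt (2*Real.pi)/2)
      = Real.exp (-a^2/2) := by
    field_simp
  have e2 : Real.exp (-a^2/2) * Real.exp (a^2/2) = 1 := by
    rw [← Real.exp_add, show (-a^2/2) + a^2/2 = 0 by ring, Real.exp_zero]
  have e3 : (2 * (Real.sqrt (2*Real.pi))⁻¹ * Real.exp (-a^2/2)) *
      (a^2 * (Real.sqrt (2*Real.pi)/(2*a) * Real.exp (a^2/2) *
        (Real.sqrt (2*Real.pi) * gaussCdf (-a))))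
      = Real.sqrt (2*Real.pi) * a * gaussCdf (-a) := by
    have hS : Real.sqrt (2*Real.pi) * (Real.sqrt (2*Real.pi))⁻¹ = 1 :=
      mul_inv_cancel₀ (ne_of_gt h2pi)
    have hr : (2 * (Real.sqrt (2*Real.pi))⁻¹ * Real.exp (-a^2/2)) *
        (a^2 * (Real.sqrt (2*Real.pi)/(2*a) * Real.exp (a^2/2) *
          (Real.sqrt (2*Real.pi) * gaussCdf (-a))))
        = (Real.exp (-a^2/2) * Real.exp (a^2/2)) *
          ((Real.sqrt (2*Real.pi) * (Real.sqrt (2*Real.pi))⁻¹) *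
            (Real.sqrt (2*Real.pi) * ((2*a^2)/(2*a)) * gaussCdf (-a))) := by
      ring
    have ha2 : (2*a^2)/(2*a) = a := by
      field_simp
    rw [hr, e2, hS, ha2, one_mul, one_mul]
  rw [e1, e3]

lemma main_zero :
    (∫ t in Ioo (0:ℝ) 1, (1 / Real.sqrt t) * gaussCdf (-((0:ℝ) / Real.sqrt (1 - t)))) = 1 := by
  have hcongr : ∀ t : ℝ, (1 / Real.sqrt t) * gaussCdf (-((0:ℝ) / Real.sqrt (1 - t)))
      = (1/2) * (1 / Real.sqrt t) := by
    intro t; rw [zero_div, neg_zero, gaussCdf_zero]; ring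
  simp only [hcongr]
  rw [MeasureTheory.integral_const_mul]
  have hint : (∫ t in Ioo (0:ℝ) 1, 1 / Real.sqrt t) = 2 := by
    rw [← integral_Ioc_eq_integral_Ioo, ← intervalIntegral.integral_of_le zero_le_one]
    have hc : EqOn (fun t : ℝ => 1 / Real.sqrt t) (fun t : ℝ => t ^ (-(1/2) : ℝ))
        (uIcc (0:ℝ) 1) := by
      intro t ht
      rw [uIcc_of_le (zero_le_one)] at ht
      simp only
      rcases eq_or_lt_of_le ht.1 with h | h
      · rw [← h, Real.sqrt_zero, Real.zero_rpow (by norm_num)]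
        simp
      · rw [Real.rpow_neg h.le, Real.sqrt_eq_rpow, one_div]
    rw [intervalIntegral.integral_congr hc, integral_rpow (Or.inl (by norm_num))]
    norm_num
  rw [hint]; norm_num

end Main

end GaussAux

/-- For every `y ∈ ℝ`,
`∫_0^1 t^{-1/2} Φ(-|y|/√(1-t)) dt = e^{-y²/2} - √(2π)·|y|·Φ(-|y|)`. -/
theorem integral_rpow_gaussCdf (y : ℝ) :
    (∫ t in Set.Ioo (0 : ℝ) 1, (1 / Real.sqrt t) * gaussCdf (-(|y| / Real.sqrt (1 - t))))
      = Real.exp (-y ^ 2 / 2) - Real.sqrt (2 * Real.pi) * |y| * gaussCdf (-|y|) := by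
  rcases eq_or_lt_of_le (abs_nonneg y) with h0 | hpos
  · rw [← h0]
    have hy : y = 0 := abs_eq_zero.mp h0.symm
    subst hy
    simpa using GaussAux.main_zero
  · have := GaussAux.main_pos hpos
    rw [this]
    rw [show |y|^2 = y^2 from sq_abs y]
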